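/- Let G be a bipartite graph on 2n vertices whose edge set is a disjoint union of n matchings E₁, ..., E_n that are 2-separated: no two distinct edges of the same matching E_i are joined by a path of length at most 2 in G. Then G has at most n^{3/2} edges. -/

import Mathlib

/-- A bipartite graph on `2n` vertices whose edge set is a disjoint union of `n`
matchings which are 2-separated (no two distinct edges of the same matching are
joined by a walk of length at most 2) has at most `n^(3/2)` edges. -/
theorem two_separated_bound {A B : Type*} [Fintype A] [Fintype B]
    [DecidableEq A] [DecidableEq B] (n : ℕ)
    (hcard : Fintype.card A + Fintype.card B = 2 * n)
    (E : Fin n → Finset (A × B))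
    (hdisj : ∀ i j, i ≠ j → Disjoint (E i) (E j))
    (hmatch : ∀ i, ∀ e ∈ E i, ∀ e' ∈ E i, (e.1 = e'.1 ∨ e.2 = e'.2) → e = e')
    (hsep : ¬ ∃ t : ℕ, t ≤ 2 ∧ ∃ (a : ℕ → A ⊕ B) (i : Fin n) (e e' : A × B),
      e ∈ E i ∧ e' ∈ E i ∧ e ≠ e' ∧
      (a 0 = Sum.inl e.1 ∨ a 0 = Sum.inr e.2) ∧
      (a t = Sum.inl e'.1 ∨ a t = Sum.inr e'.2) ∧
      (∀ s < t, ∃ (j : Fin n) (f : A × B), f ∈ E j ∧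
        ((a s = Sum.inl f.1 ∧ a (s + 1) = Sum.inr f.2) ∨
         (a s = Sum.inr f.2 ∧ a (s + 1) = Sum.inl f.1)))) :
    ((∑ i, (E i).card : ℕ) : ℝ) ≤ (n : ℝ) ^ (3 / 2 : ℝ) := by
  classical
  set allE : Finset (A × B) := Finset.univ.biUnion (fun i => E i) with hallE
  set dA : A → ℕ := fun a => (allE.filter (fun f => f.1 = a)).card with hdA
  -- key separation consequence: two edges of the same matching cannot have
  -- their left endpoints joined to a common vertex b
  have hA : ∀ (i : Fin n), ∀ e ∈ E i, ∀ e' ∈ E i, ∀ b : B,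
      (e.1, b) ∈ allE → (e'.1, b) ∈ allE → e = e' := by
    intro i e he e' he' b hb hb'
    by_contra hne
    simp only [hallE, Finset.mem_biUnion, Finset.mem_univ, true_and] at hb hb'
    obtain ⟨j, hj⟩ := hb
    obtain ⟨j', hj'⟩ := hb'
    apply hsep
    refine ⟨2, le_refl 2,
      (fun s => if s = 0 then Sum.inl e.1 else if s = 1 then Sum.inr b else Sum.inl e'.1),
      i, e, e', he, he', hne, Or.inl (by simp), Or.inl (by simp), ?_⟩
    intro s hs
    interval_cases s
    · exact ⟨j, (e.1, b), hj, Or.inl ⟨by simp, by simp⟩⟩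
    · exact ⟨j', (e'.1, b), hj', Or.inr ⟨by simp, by simp⟩⟩
  -- per-matching degree bound
  have key : ∀ i : Fin n, (∑ e ∈ E i, dA e.1) ≤ Fintype.card B := by
    intro i
    have hcardeq : (∑ e ∈ E i, dA e.1)
        = ((E i).sigma (fun e => allE.filter (fun f => f.1 = e.1))).card :=
      (Finset.card_sigma _ _).symm
    rw [hcardeq]
    have hmaps : ∀ p ∈ (E i).sigma (fun e => allE.filter (fun f => f.1 = e.1)),
        (p.2.2 : B) ∈ (Finset.univ : Finset B) := fun _ _ => Finset.mem_univ _
    refine le_trans (Finset.card_le_card_of_injOn (fun p => p.2.2) hmaps ?_)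
      (by simp)
    rintro ⟨pe, pf⟩ hp ⟨qe, qf⟩ hq hpq
    simp only [Finset.mem_coe, Finset.mem_sigma, Finset.mem_filter] at hp hq
    obtain ⟨hpe, hpf, hpf1⟩ := hp
    obtain ⟨hqe, hqf, hqf1⟩ := hq
    simp only at hpq hpf1 hqf1
    have he : pe = qe := by
      apply hA i pe hpe qe hqe pf.2
      · rwa [show (pe.1, pf.2) = pf from Prod.ext hpf1.symm rfl]
      · rw [show (qe.1, pf.2) = qf from Prod.ext hqf1.symm hpq]; exact hqf
    have hf : pf = qf := Prod.ext (by rw [hpf1, he, ← hqf1]) hpq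
    simp [he, hf]
  -- sums over all edges
  have hpd : ((Finset.univ : Finset (Fin n)) : Set (Fin n)).PairwiseDisjoint E :=
    fun i _ j _ hij => hdisj i j hij
  have sum_split : ∀ g : A × B → ℕ, ∑ e ∈ allE, g e = ∑ i, ∑ e ∈ E i, g e :=
    fun g => Finset.sum_biUnion hpd
  have fiber : ∑ e ∈ allE, dA e.1 = ∑ a, dA a * dA a := by
    rw [← Finset.sum_fiberwise_of_maps_to (g := fun e : A × B => e.1)
      (t := (Finset.univ : Finset A)) (fun e _ => Finset.mem_univ _)]
    refine Finset.sum_congr rfl (fun a _ => ?_)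
    have hc : ∀ e ∈ allE.filter (fun e => e.1 = a), dA e.1 = dA a := by
      intro e he; rw [Finset.mem_filter] at he; rw [he.2]
    rw [Finset.sum_congr rfl hc, Finset.sum_const, smul_eq_mul]
  have hm1 : ∑ i, (E i).card = allE.card :=
    (Finset.card_biUnion (fun i _ j _ h => hdisj i j h)).symm
  have hm2 : allE.card = ∑ a, dA a :=
    Finset.card_eq_sum_card_fiberwise (f := fun e : A × B => e.1)
      (fun e _ => Finset.mem_univ _)
  -- Cauchy-Schwarz
  have cauchy : (∑ a, dA a) ^ 2 ≤ Fintype.card A * ∑ a, dA a * dA a := by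
    have := sq_sum_le_card_mul_sum_sq
      (s := (Finset.univ : Finset A)) (f := fun a => (dA a : ℤ))
    have h2 : ((∑ a, dA a : ℕ) : ℤ) ^ 2 ≤ (Fintype.card A : ℤ) * ∑ a, ((dA a : ℤ)) ^ 2 := by
      push_cast
      simpa using this
    have h3 : ((∑ a, dA a : ℕ) : ℤ) ^ 2 ≤ ((Fintype.card A * ∑ a, dA a * dA a : ℕ) : ℤ) := by
      push_cast
      simpa [sq] using h2
    exact_mod_cast h3
  -- put it together: m^2 ≤ n^3
  have hS : ∑ a, dA a * dA a ≤ n * Fintype.card B := by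
    rw [← fiber, sum_split (fun e => dA e.1)]
    calc ∑ i : Fin n, ∑ e ∈ E i, dA e.1 ≤ ∑ _i : Fin n, Fintype.card B :=
          Finset.sum_le_sum (fun i _ => key i)
      _ = n * Fintype.card B := by simp [Finset.sum_const, mul_comm]
  have hAB : Fintype.card A * Fintype.card B ≤ n * n := by
    nlinarith [sq_nonneg (Fintype.card A - Fintype.card B : ℤ), hcard]
  set m : ℕ := ∑ i, (E i).card with hm
  have hmain : m ^ 2 ≤ n ^ 3 := by
    have h1 : m ^ 2 ≤ Fintype.card A * (n * Fintype.card B) := by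
      calc m ^ 2 = (∑ a, dA a) ^ 2 := by rw [hm1, hm2]
        _ ≤ Fintype.card A * ∑ a, dA a * dA a := cauchy
        _ ≤ Fintype.card A * (n * Fintype.card B) :=
            Nat.mul_le_mul_left _ hS
    calc m ^ 2 ≤ Fintype.card A * (n * Fintype.card B) := h1
      _ = n * (Fintype.card A * Fintype.card B) := by ring
      _ ≤ n * (n * n) := Nat.mul_le_mul_left _ hAB
      _ = n ^ 3 := by ring
  -- conclude in ℝ
  have hmR : ((m : ℝ)) ^ 2 ≤ (n : ℝ) ^ 3 := by exact_mod_cast hmain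
  have hsq : (m : ℝ) ≤ Real.sqrt ((n : ℝ) ^ 3) := Real.le_sqrt_of_sq_le hmR
  have hrw : Real.sqrt ((n : ℝ) ^ 3) = (n : ℝ) ^ (3 / 2 : ℝ) := by
    rw [Real.sqrt_eq_rpow, ← Real.rpow_natCast (n : ℝ) 3,
      ← Real.rpow_mul (Nat.cast_nonneg n)]
    norm_num
  calc ((m : ℕ) : ℝ) ≤ Real.sqrt ((n : ℝ) ^ 3) := hsq
    _ = (n : ℝ) ^ (3 / 2 : ℝ) := hrw
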